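/- Algebraic Bethe ansatz form of the separate states: assume the SoV basis hypothesis. For λ ∈ ℂ, let 𝔹(λ) be the unique operator on H such that ⟨h| ∘ 𝔹(λ) = [∏_{a=1}^N (λ − ξ_a)^{n−1−h_a} (λ − ξ_a + η)^{h_a}] · ⟨h| for every h ∈ {0,…,n−1}^N. Fix ᾱ ∈ ℂ and set α_1(λ) = ᾱ·∏_{a=1}^N (λ + η − ξ_a). Let M ≤ N, let λ_1,…,λ_M ∈ ℂ with λ_j ≠ ξ_a for all j, a, and set φ(λ) = ∏_{j=1}^M (λ − λ_j). Let |t_0⟩ ∈ H be the unique vector with ⟨h|t_0⟩ = ∏_{a=1}^N α_1(ξ_a)^{h_a}, and let |t⟩ ∈ H be the unique vector with ⟨h|t⟩ = ∏_{a=1}^N α_1(ξ_a)^{h_a} · φ(ξ_a − η)^{h_a} · φ(ξ_a)^{n−1−h_a}, for all h. Then |t⟩ = (−1)^{M·N·(n−1)} · 𝔹(λ_1) 𝔹(λ_2) ⋯ 𝔹(λ_M) |t_0⟩. -/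

import Mathlib

open Matrix BigOperators

noncomputable section

namespace GLnSoV

/-- The permutation operator on `ℂ^n ⊗ ℂ^n`. -/
def permOp (n : ℕ) : Matrix (Fin n × Fin n) (Fin n × Fin n) ℂ :=
  Matrix.of fun p q => if p.1 = q.2 ∧ p.2 = q.1 then (1 : ℂ) else 0

/-- The rational `gl_n` R-matrix `R(λ) = λ·Id + η·P`. -/
def Rmat (n : ℕ) (η lam : ℂ) : Matrix (Fin n × Fin n) (Fin n × Fin n) ℂ :=
  lam • (1 : Matrix (Fin n × Fin n) (Fin n × Fin n) ℂ) + η • permOp n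

/-- `R(λ)` acting on the `a`-th and `b`-th factors of a tensor product of copies of `ℂ^n`. -/
def Rab (n : ℕ) (η : ℂ) {ι : Type} [Fintype ι] [DecidableEq ι] (a b : ι) (lam : ℂ) :
    Matrix (ι → Fin n) (ι → Fin n) ℂ :=
  Matrix.of fun x y =>
    Rmat n η lam (x a, x b) (y a, y b) *
      ∏ c ∈ Finset.univ.filter (fun c => c ≠ a ∧ c ≠ b), (if x c = y c then (1 : ℂ) else 0)

/-- `R(λ)` acting on the auxiliary space and the `j`-th site of the quantum space. -/
def Raux (n N : ℕ) (η : ℂ) (lam : ℂ) (j : Fin N) :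
    Matrix (Fin n × (Fin N → Fin n)) (Fin n × (Fin N → Fin n)) ℂ :=
  Matrix.of fun p q =>
    Rmat n η lam (p.1, p.2 j) (q.1, q.2 j) *
      ∏ c ∈ Finset.univ.filter (fun c => c ≠ j), (if p.2 c = q.2 c then (1 : ℂ) else 0)

/-- The twist matrix `K` acting on the auxiliary space. -/
def Kaux (n N : ℕ) (K : Matrix (Fin n) (Fin n) ℂ) :
    Matrix (Fin n × (Fin N → Fin n)) (Fin n × (Fin N → Fin n)) ℂ :=
  Matrix.of fun p q => K p.1 q.1 * (if p.2 = q.2 then (1 : ℂ) else 0)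

/-- The twisted monodromy matrix `M^{(K)}(λ) = K_a R_{a,N}(λ-ξ_N) ⋯ R_{a,1}(λ-ξ_1)`. -/
def monodromy (n N : ℕ) (η : ℂ) (ξ : Fin N → ℂ) (K : Matrix (Fin n) (Fin n) ℂ) (lam : ℂ) :
    Matrix (Fin n × (Fin N → Fin n)) (Fin n × (Fin N → Fin n)) ℂ :=
  Kaux n N K * (List.ofFn (fun j : Fin N => Raux n N η (lam - ξ j.rev) j.rev)).prod

/-- The operator permuting the tensor factors of `(ℂ^n)^{⊗m}` according to `π`. -/
def permTensorOp (n m : ℕ) (π : Equiv.Perm (Fin m)) :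
    Matrix (Fin m → Fin n) (Fin m → Fin n) ℂ :=
  Matrix.of fun v w => if v = w ∘ π then (1 : ℂ) else 0

/-- The antisymmetrizer `P⁻_{1…m}` on `(ℂ^n)^{⊗m}`. -/
def antisym (n m : ℕ) : Matrix (Fin m → Fin n) (Fin m → Fin n) ℂ :=
  (m.factorial : ℂ)⁻¹ •
    ∑ π : Equiv.Perm (Fin m), ((Equiv.Perm.sign π : ℤ) : ℂ) • permTensorOp n m π

/-- The monodromy matrix with the `j`-th copy of `(ℂ^n)^{⊗m}` as auxiliary space. -/
def MauxJ (n N : ℕ) (η : ℂ) (ξ : Fin N → ℂ) (K : Matrix (Fin n) (Fin n) ℂ) (m : ℕ)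
    (j : Fin m) (lam : ℂ) :
    Matrix ((Fin m → Fin n) × (Fin N → Fin n)) ((Fin m → Fin n) × (Fin N → Fin n)) ℂ :=
  Matrix.of fun p q =>
    monodromy n N η ξ K lam (p.1 j, p.2) (q.1 j, q.2) *
      ∏ c ∈ Finset.univ.filter (fun c => c ≠ j), (if p.1 c = q.1 c then (1 : ℂ) else 0)

/-- The antisymmetrizer tensored with the identity of the quantum space. -/
def antisymH (n N m : ℕ) :
    Matrix ((Fin m → Fin n) × (Fin N → Fin n)) ((Fin m → Fin n) × (Fin N → Fin n)) ℂ :=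
  Matrix.of fun p q => antisym n m p.1 q.1 * (if p.2 = q.2 then (1 : ℂ) else 0)

/-- The fused transfer matrix `T_m^{(K)}(λ)`, the trace over the `m` auxiliary copies of `ℂ^n`
of `P⁻_{1…m} M₁(λ) M₂(λ-η) ⋯ M_m(λ-(m-1)η)`. -/
def transfer (n N : ℕ) (η : ℂ) (ξ : Fin N → ℂ) (K : Matrix (Fin n) (Fin n) ℂ)
    (m : ℕ) (lam : ℂ) : Matrix (Fin N → Fin n) (Fin N → Fin n) ℂ :=
  Matrix.of fun x y =>
    ∑ v : Fin m → Fin n,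
      (antisymH n N m *
        (List.ofFn (fun j : Fin m => MauxJ n N η ξ K m j (lam - (j : ℕ) * η))).prod)
        (v, x) (v, y)

/-- `K ⊗ ⋯ ⊗ K` on `(ℂ^n)^{⊗m}`. -/
def Ktensor (n : ℕ) (K : Matrix (Fin n) (Fin n) ℂ) (m : ℕ) :
    Matrix (Fin m → Fin n) (Fin m → Fin n) ℂ :=
  Matrix.of fun v w => ∏ j, K (v j) (w j)

/-- The asymptotic coefficient `tr(P⁻_{1…m} K₁ ⋯ K_m)`. -/
def asymCoef (n : ℕ) (K : Matrix (Fin n) (Fin n) ℂ) (m : ℕ) : ℂ :=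
  (antisym n m * Ktensor n K m).trace

/-- The scalar quantum determinant. -/
def qdet (n N : ℕ) (η : ℂ) (ξ : Fin N → ℂ) (K : Matrix (Fin n) (Fin n) ℂ) (lam : ℂ) : ℂ :=
  K.det * ∏ b, ((lam - ξ b + η) * ∏ m ∈ Finset.Icc 1 (n - 1), (lam - ξ b - (m : ℂ) * η))

/-- The candidate eigenvalue function `t₁^{(K,x)}(λ)`. -/
def t1fun (n N : ℕ) (ξ : Fin N → ℂ) (K : Matrix (Fin n) (Fin n) ℂ) (x : Fin N → ℂ)
    (lam : ℂ) : ℂ :=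
  K.trace * ∏ a, (lam - ξ a) +
    ∑ a, x a * ∏ b ∈ Finset.univ.erase a, (lam - ξ b) / (ξ a - ξ b)

/-- The interpolation coefficients `g_a^{(m+1)}(λ)` (second argument is `m`). -/
def gfun (N : ℕ) (η : ℂ) (ξ : Fin N → ℂ) (m : ℕ) (a : Fin N) (lam : ℂ) : ℂ :=
  (∏ b ∈ Finset.univ.erase a, (lam - ξ b) / (ξ a - ξ b)) *
    ∏ b, ∏ r ∈ Finset.Icc 1 m, (ξ a - ξ b - (r : ℂ) * η)⁻¹

/-- The candidate eigenvalue functions `t_m^{(K,x)}(λ)`, defined recursively. -/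
def tfun (n N : ℕ) (η : ℂ) (ξ : Fin N → ℂ) (K : Matrix (Fin n) (Fin n) ℂ)
    (x : Fin N → ℂ) : ℕ → ℂ → ℂ
  | 0, _ => 1
  | 1, lam => t1fun n N ξ K x lam
  | m + 2, lam =>
      (∏ b, ∏ r ∈ Finset.Icc 1 (m + 1), (lam - ξ b - (r : ℂ) * η)) *
        (asymCoef n K (m + 2) * ∏ b, (lam - ξ b) +
          ∑ a, gfun N η ξ (m + 1) a lam * x a * tfun n N η ξ K x (m + 1) (ξ a - η))

/-- The SoV operator `∏_{a} (T₁^{(K)}(ξ_a))^{h_a}`. -/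
def sovOp (n N : ℕ) (η : ℂ) (ξ : Fin N → ℂ) (K : Matrix (Fin n) (Fin n) ℂ)
    (h : Fin N → Fin n) : Matrix (Fin N → Fin n) (Fin N → Fin n) ℂ :=
  (List.ofFn (fun a : Fin N => transfer n N η ξ K 1 (ξ a) ^ (h a : ℕ))).prod

/-- The SoV covector `⟨h| = ⟨S| ∏_a (T₁^{(K)}(ξ_a))^{h_a}`. -/
def sovCovector (n N : ℕ) (η : ℂ) (ξ : Fin N → ℂ) (K : Matrix (Fin n) (Fin n) ℂ)
    (S : (Fin N → Fin n) → ℂ) (h : Fin N → Fin n) : (Fin N → Fin n) → ℂ :=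
  S ᵥ* sovOp n N η ξ K h

/-- The SoV basis hypothesis: the covectors `⟨h|` form a basis of the dual space. -/
def sovBasisHyp (n N : ℕ) (η : ℂ) (ξ : Fin N → ℂ) (K : Matrix (Fin n) (Fin n) ℂ)
    (S : (Fin N → Fin n) → ℂ) : Prop :=
  ∃ B : Module.Basis (Fin N → Fin n) ℂ ((Fin N → Fin n) → ℂ),
    ∀ h, B h = sovCovector n N η ξ K S h

/-- The coefficient `α₁(λ) = ᾱ ∏_a (λ + η - ξ_a)`. -/
def alpha1 (N : ℕ) (η : ℂ) (ξ : Fin N → ℂ) (abar lam : ℂ) : ℂ :=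
  abar * ∏ a, (lam + η - ξ a)

/-- The coefficients `α_b(λ)` of the quantum spectral curve. -/
def alphaF (N : ℕ) (η : ℂ) (ξ : Fin N → ℂ) (abar : ℂ) : ℕ → ℂ → ℂ
  | 0, _ => -1
  | j + 1, lam =>
      (-1 : ℂ) ^ j * ∏ h ∈ Finset.range (j + 1), alpha1 N η ξ abar (lam - (h : ℂ) * η)


/-- Algebraic Bethe ansatz form of the separate states: the separate state
`|t⟩` is obtained from the reference state `|t₀⟩` by acting with the `𝔹`-operators at the
roots of `φ`. -/
theorem aba_form_of_separate_states (n N : ℕ) (hn : 2 ≤ n) (hN : 1 ≤ N) (η : ℂ)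
    (ξ : Fin N → ℂ) (K : Matrix (Fin n) (Fin n) ℂ) (S : (Fin N → Fin n) → ℂ)
    (hSoV : sovBasisHyp n N η ξ K S)
    (Bop : ℂ → Matrix (Fin N → Fin n) (Fin N → Fin n) ℂ)
    (hB : ∀ (lam : ℂ) (h : Fin N → Fin n),
      sovCovector n N η ξ K S h ᵥ* Bop lam =
        (∏ a, (lam - ξ a) ^ (n - 1 - (h a : ℕ)) * (lam - ξ a + η) ^ (h a : ℕ)) •
          sovCovector n N η ξ K S h)
    (abar : ℂ) (M : ℕ) (hM : M ≤ N) (lamr : Fin M → ℂ) (hroots : ∀ j a, lamr j ≠ ξ a)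
    (t0 t : (Fin N → Fin n) → ℂ)
    (ht0 : ∀ h : Fin N → Fin n,
      sovCovector n N η ξ K S h ⬝ᵥ t0 = ∏ a, alpha1 N η ξ abar (ξ a) ^ (h a : ℕ))
    (ht : ∀ h : Fin N → Fin n,
      sovCovector n N η ξ K S h ⬝ᵥ t =
        ∏ a, alpha1 N η ξ abar (ξ a) ^ (h a : ℕ) *
          (∏ j, (ξ a - η - lamr j)) ^ (h a : ℕ) *
          (∏ j, (ξ a - lamr j)) ^ (n - 1 - (h a : ℕ))) :
    t = ((-1 : ℂ) ^ (M * N * (n - 1))) •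
      ((List.ofFn fun j : Fin M => Bop (lamr j)).prod *ᵥ t0) := by
  obtain ⟨B, hBdef⟩ := hSoV
  set cov := sovCovector n N η ξ K S with hcov
  set sc : ℂ → (Fin N → Fin n) → ℂ := fun lam h =>
    ∏ a, (lam - ξ a) ^ (n - 1 - (h a : ℕ)) * (lam - ξ a + η) ^ (h a : ℕ) with hsc
  have hlist : ∀ (L : List ℂ) (h : Fin N → Fin n),
      cov h ᵥ* (L.map Bop).prod = (L.map (fun lam => sc lam h)).prod • cov h := by
    intro L h
    induction L with
    | nil => simp
    | cons x L ih =>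
      rw [List.map_cons, List.prod_cons, ← Matrix.vecMul_vecMul, hB, Matrix.smul_vecMul, ih,
        List.map_cons, List.prod_cons, smul_smul]
  set rhs := ((-1 : ℂ) ^ (M * N * (n - 1))) •
      ((List.ofFn fun j : Fin M => Bop (lamr j)).prod *ᵥ t0) with hrhs
  have key : ∀ h, cov h ⬝ᵥ t = cov h ⬝ᵥ rhs := by
    intro h
    have hofn : (List.ofFn fun j : Fin M => Bop (lamr j)) = (List.ofFn lamr).map Bop := by
      rw [List.map_ofFn]; rfl
    rw [hrhs, dotProduct_smul, Matrix.dotProduct_mulVec, hofn, hlist,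
      smul_dotProduct, ht0, ht h]
    rw [List.map_ofFn, show ((fun lam => sc lam h) ∘ lamr) = fun j => sc (lamr j) h from rfl,
      List.prod_ofFn]
    -- scalar identity
    have per_a : ∀ a : Fin N,
        alpha1 N η ξ abar (ξ a) ^ (h a : ℕ) *
          (∏ j, (ξ a - η - lamr j)) ^ (h a : ℕ) *
          (∏ j, (ξ a - lamr j)) ^ (n - 1 - (h a : ℕ)) =
        (-1 : ℂ) ^ (M * (n - 1)) *
          ((∏ j, (lamr j - ξ a) ^ (n - 1 - (h a : ℕ)) * (lamr j - ξ a + η) ^ (h a : ℕ)) *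
            alpha1 N η ξ abar (ξ a) ^ (h a : ℕ)) := by
      intro a
      have e1 : (∏ j, (ξ a - η - lamr j)) = (-1 : ℂ) ^ M * ∏ j, (lamr j - ξ a + η) := by
        rw [show ((-1 : ℂ) ^ M) = ∏ _j : Fin M, (-1 : ℂ) by simp, ← Finset.prod_mul_distrib]
        exact Finset.prod_congr rfl fun j _ => by ring
      have e2 : (∏ j, (ξ a - lamr j)) = (-1 : ℂ) ^ M * ∏ j, (lamr j - ξ a) := by
        rw [show ((-1 : ℂ) ^ M) = ∏ _j : Fin M, (-1 : ℂ) by simp, ← Finset.prod_mul_distrib]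
        exact Finset.prod_congr rfl fun j _ => by ring
      have hle : (h a : ℕ) ≤ n - 1 := Nat.le_sub_one_of_lt (h a).isLt
      have hexp : M * (h a : ℕ) + M * (n - 1 - (h a : ℕ)) = M * (n - 1) := by
        rw [← Nat.mul_add, Nat.add_sub_cancel' hle]
      rw [e1, e2, Finset.prod_mul_distrib, Finset.prod_pow, Finset.prod_pow,
        mul_pow, mul_pow, ← pow_mul, ← pow_mul]
      rw [show ((-1:ℂ) ^ (M * (h a : ℕ)) * (∏ j, (lamr j - ξ a + η)) ^ (h a : ℕ)) = 
        (∏ j, (lamr j - ξ a + η)) ^ (h a : ℕ) * (-1:ℂ) ^ (M * (h a : ℕ)) from mul_comm _ _]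
      calc alpha1 N η ξ abar (ξ a) ^ (h a : ℕ) *
            ((∏ j, (lamr j - ξ a + η)) ^ (h a : ℕ) * (-1:ℂ) ^ (M * (h a : ℕ))) *
            ((-1:ℂ) ^ (M * (n - 1 - (h a : ℕ))) * (∏ j, (lamr j - ξ a)) ^ (n - 1 - (h a : ℕ)))
          = ((-1:ℂ) ^ (M * (h a : ℕ)) * (-1:ℂ) ^ (M * (n - 1 - (h a : ℕ)))) *
            (((∏ j, (lamr j - ξ a)) ^ (n - 1 - (h a : ℕ)) *
              (∏ j, (lamr j - ξ a + η)) ^ (h a : ℕ)) *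
              alpha1 N η ξ abar (ξ a) ^ (h a : ℕ)) := by ring
        _ = _ := by rw [← pow_add, hexp]
    calc (∏ a, alpha1 N η ξ abar (ξ a) ^ (h a : ℕ) *
            (∏ j, (ξ a - η - lamr j)) ^ (h a : ℕ) *
            (∏ j, (ξ a - lamr j)) ^ (n - 1 - (h a : ℕ)))
        = ∏ a, (-1 : ℂ) ^ (M * (n - 1)) *
            ((∏ j, (lamr j - ξ a) ^ (n - 1 - (h a : ℕ)) * (lamr j - ξ a + η) ^ (h a : ℕ)) *
              alpha1 N η ξ abar (ξ a) ^ (h a : ℕ)) := Finset.prod_congr rfl fun a _ => per_a a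
      _ = (∏ _a : Fin N, (-1 : ℂ) ^ (M * (n - 1))) *
            ((∏ a, ∏ j, (lamr j - ξ a) ^ (n - 1 - (h a : ℕ)) * (lamr j - ξ a + η) ^ (h a : ℕ)) *
              ∏ a, alpha1 N η ξ abar (ξ a) ^ (h a : ℕ)) := by
            rw [Finset.prod_mul_distrib, Finset.prod_mul_distrib]
      _ = (-1 : ℂ) ^ (M * N * (n - 1)) •
            ((∏ j, sc (lamr j) h) • ∏ a, alpha1 N η ξ abar (ξ a) ^ (h a : ℕ)) := by
            rw [Finset.prod_const, Finset.card_univ, Fintype.card_fin, ← pow_mul,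
              show M * (n - 1) * N = M * N * (n - 1) by ring, Finset.prod_comm]
            simp only [smul_eq_mul, hsc]
  -- conclude via the basis
  let f : ((Fin N → Fin n) → ℂ) →ₗ[ℂ] ℂ :=
    { toFun := fun w => w ⬝ᵥ (t - rhs)
      map_add' := fun u v => add_dotProduct u v _
      map_smul' := fun c u => smul_dotProduct c u _ }
  have hf0 : f = 0 := B.ext fun h => by
    have : cov h ⬝ᵥ (t - rhs) = 0 := by
      rw [dotProduct_sub, key h, sub_self]
    simpa [f, hBdef h] using this
  funext x
  have hx := congrArg (fun g : ((Fin N → Fin n) → ℂ) →ₗ[ℂ] ℂ => g (Pi.single x 1)) hf0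
  have hx2 : (Pi.single x 1 : (Fin N → Fin n) → ℂ) ⬝ᵥ (t - rhs) = 0 := hx
  rw [single_dotProduct, one_mul, Pi.sub_apply, sub_eq_zero] at hx2
  exact hx2


end GLnSoV
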